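/- Let a be a real number with 0 < a < 1. Then the function t ↦ tan(at)/tan(t) is strictly decreasing on the open interval (0, π/2). -/

import Mathlib

open Real

lemma sin_mul_gt (a x : ℝ) (ha0 : 0 < a) (ha1 : a < 1) (hx0 : 0 < x) (hxpi : x ≤ π) :
    a * Real.sin x < Real.sin (a * x) := by
  have h := strictConcaveOn_sin_Icc.2 (x := 0) (y := x)
    ⟨le_rfl, Real.pi_pos.le⟩ ⟨hx0.le, hxpi⟩ hx0.ne
    (by linarith : (0:ℝ) < 1 - a) ha0 (by ring)
  simpa using h

theorem stmt16 (a : ℝ) (ha0 : 0 < a) (ha1 : a < 1) :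
    StrictAntiOn (fun t : ℝ => Real.tan (a * t) / Real.tan t)
      (Set.Ioo 0 (π / 2)) := by
  have key : ∀ t ∈ Set.Ioo (0:ℝ) (π/2), ∃ d,
      HasDerivAt (fun t : ℝ => Real.tan (a * t) / Real.tan t) d t ∧ d < 0 := by
    intro t ht
    obtain ⟨ht0, ht2⟩ := ht
    have hat0 : 0 < a * t := mul_pos ha0 ht0
    have hat2 : a * t < π / 2 := lt_trans (by nlinarith) ht2
    have hct : 0 < Real.cos t := Real.cos_pos_of_mem_Ioo ⟨by linarith [Real.pi_pos], ht2⟩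
    have hcat : 0 < Real.cos (a * t) :=
      Real.cos_pos_of_mem_Ioo ⟨by linarith [Real.pi_pos], hat2⟩
    have hst : 0 < Real.sin t := Real.sin_pos_of_pos_of_lt_pi ht0 (by linarith [Real.pi_pos])
    have hsat : 0 < Real.sin (a * t) :=
      Real.sin_pos_of_pos_of_lt_pi hat0 (by linarith [Real.pi_pos])
    have htant : 0 < Real.tan t := Real.tan_pos_of_pos_of_lt_pi_div_two ht0 ht2
    -- derivative
    have h1 : HasDerivAt (fun t : ℝ => Real.tan (a * t)) (a * (1 / Real.cos (a*t) ^ 2)) t := by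
      have := (Real.hasDerivAt_tan hcat.ne').comp t ((hasDerivAt_id t).const_mul a)
      simpa [mul_comm, Function.comp_def] using this
    have h2 : HasDerivAt Real.tan (1 / Real.cos t ^ 2) t := Real.hasDerivAt_tan hct.ne'
    have hd := h1.div h2 htant.ne'
    refine ⟨_, hd, ?_⟩
    -- sign of derivative
    have hnum : a * (1 / Real.cos (a*t) ^ 2) * Real.tan t
        - Real.tan (a * t) * (1 / Real.cos t ^ 2) < 0 := by
      have hk : a * Real.sin (2 * t) < Real.sin (a * (2 * t)) :=
        sin_mul_gt a (2*t) ha0 ha1 (by linarith) (by linarith [Real.pi_pos])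
      rw [show a * (2*t) = 2 * (a*t) by ring, Real.sin_two_mul, Real.sin_two_mul] at hk
      rw [Real.tan_eq_sin_div_cos, Real.tan_eq_sin_div_cos, sub_neg]
      have hA : a * (1 / Real.cos (a*t) ^ 2) * (Real.sin t / Real.cos t)
          = (a * Real.sin t) / (Real.cos (a*t) ^ 2 * Real.cos t) := by ring
      have hB : Real.sin (a*t) / Real.cos (a*t) * (1 / Real.cos t ^ 2)
          = Real.sin (a*t) / (Real.cos (a*t) * Real.cos t ^ 2) := by ring
      rw [hA, hB, div_lt_div_iff₀ (by positivity) (by positivity)]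
      nlinarith [mul_pos hcat hct, mul_pos (mul_pos hcat hct) (mul_pos hcat hct)]
    have : (a * (1 / Real.cos (a*t) ^ 2) * Real.tan t
        - Real.tan (a * t) * (1 / Real.cos t ^ 2)) / Real.tan t ^ 2 < 0 :=
      div_neg_of_neg_of_pos hnum (by positivity)
    convert this using 1
  apply strictAntiOn_of_deriv_neg (convex_Ioo _ _)
  · intro t ht
    obtain ⟨d, hd, _⟩ := key t ht
    exact hd.continuousAt.continuousWithinAt
  · intro t ht
    rw [interior_Ioo] at ht
    obtain ⟨d, hd, hneg⟩ := key t ht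
    rwa [hd.deriv]
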